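/- Let F be a field equipped with an involutive field automorphism r ↦ r̄, let n ≥ 1, let a ∈ F^n and let λ ∈ F satisfy λ·λ̄ = 1. Set A = circ_λ(a) and let C be the F-linear span in F^{2n} of the rows of the n×2n matrix G = (I_n | A). Then C is Hermitian self-dual (C = C^{⊥_H}) if and only if Θ(a, ā, 0) = −1 and Θ(a, ā, j)[λ̄] = 0 for every j ∈ {1,…,⌊n/2⌋}. -/

import Mathlib

open Matrix

/-- The mapping Θ(x,y,j)[λ] = Σ_{i=0}^{n−j−1} x_{[i+j]_n}·y_i + λ·Σ_{i=n−j}^{n−1} x_{[i+j]_n}·y_i. -/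
def Theta {R : Type*} [CommRing R] (n : ℕ) (x y : ℕ → R) (j : ℕ) (l : R) : R :=
  (∑ i ∈ Finset.range (n - j), x ((i + j) % n) * y i)
    + l * ∑ i ∈ Finset.Ico (n - j) n, x ((i + j) % n) * y i

/-- The λ-circulant matrix generated by `a`. -/
def circ {R : Type*} [CommRing R] (n : ℕ) (l : R) (a : ℕ → R) : Matrix (Fin n) (Fin n) R :=
  Matrix.of fun i j => if (i : ℕ) ≤ (j : ℕ) then a ((j : ℕ) - i) else l * a (n + j - i)

/-! ### Auxiliary entry function and sum computations -/

/-- Entry function of the λ-circulant matrix, on natural number indices. -/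
def Af {R : Type*} [CommRing R] (n : ℕ) (l : R) (a : ℕ → R) : ℕ → ℕ → R :=
  fun i j => if i ≤ j then a (j - i) else l * a (n + j - i)

lemma key_upper {R : Type*} [CommRing R] (n : ℕ) (l l' : R) (a b : ℕ → R) (h : l * l' = 1)
    (i k : ℕ) (hik : i ≤ k) (hk : k < n) :
    ∑ j ∈ Finset.range n, Af n l a i j * Af n l' b k j = Theta n a b (k - i) l' := by
  set d := k - i with hd
  have h3 : ∑ j ∈ Finset.Ico k n, Af n l a i j * Af n l' b k j
      = ∑ t ∈ Finset.Ico 0 (n - k), a ((t + d) % n) * b t := by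
    rw [Finset.sum_Ico_eq_sum_range, Finset.sum_Ico_eq_sum_range]
    simp only [Nat.sub_zero, Nat.zero_add]
    refine Finset.sum_congr rfl fun u hu => ?_
    simp only [Finset.mem_range] at hu
    rw [Af, Af, if_pos (by omega), if_pos (by omega), Nat.mod_eq_of_lt (by omega)]
    have e1 : k + u - i = u + d := by omega
    have e2 : k + u - k = u := by omega
    rw [e1, e2]
  have h1 : ∑ j ∈ Finset.Ico 0 i, Af n l a i j * Af n l' b k j
      = ∑ t ∈ Finset.Ico (n - k) (n - d), a ((t + d) % n) * b t := by
    rw [Finset.sum_Ico_eq_sum_range, Finset.sum_Ico_eq_sum_range]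
    have e0 : n - d - (n - k) = i := by omega
    rw [e0]
    simp only [Nat.sub_zero, Nat.zero_add]
    refine Finset.sum_congr rfl fun u hu => ?_
    simp only [Finset.mem_range] at hu
    rw [Af, Af, if_neg (by omega), if_neg (by omega), Nat.mod_eq_of_lt (by omega)]
    have e1 : n - k + u + d = n + u - i := by omega
    have e2 : n - k + u = n + u - k := by omega
    rw [e1, e2, mul_mul_mul_comm, h, one_mul]
  have h2 : ∑ j ∈ Finset.Ico i k, Af n l a i j * Af n l' b k j
      = l' * ∑ t ∈ Finset.Ico (n - d) n, a ((t + d) % n) * b t := by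
    rw [Finset.mul_sum, Finset.sum_Ico_eq_sum_range, Finset.sum_Ico_eq_sum_range]
    have e0 : n - (n - d) = d := by omega
    rw [e0]
    refine Finset.sum_congr rfl fun u hu => ?_
    simp only [Finset.mem_range] at hu
    rw [Af, Af, if_pos (by omega), if_neg (by omega)]
    have e1 : n - d + u + d = n + u := by omega
    rw [e1, Nat.add_mod_left, Nat.mod_eq_of_lt (by omega)]
    have e2 : i + u - i = u := by omega
    have e3 : n + (i + u) - k = n - d + u := by omega
    rw [e2, e3]
    ring
  have hsplit : ∑ j ∈ Finset.range n, Af n l a i j * Af n l' b k j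
      = (∑ j ∈ Finset.Ico 0 i, Af n l a i j * Af n l' b k j)
        + (∑ j ∈ Finset.Ico i k, Af n l a i j * Af n l' b k j)
        + ∑ j ∈ Finset.Ico k n, Af n l a i j * Af n l' b k j := by
    rw [Finset.range_eq_Ico, ← Finset.sum_Ico_consecutive _ (Nat.zero_le k) hk.le,
      ← Finset.sum_Ico_consecutive _ (Nat.zero_le i) hik]
  have htheta : Theta n a b d l'
      = ((∑ t ∈ Finset.Ico 0 (n - k), a ((t + d) % n) * b t)
          + ∑ t ∈ Finset.Ico (n - k) (n - d), a ((t + d) % n) * b t)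
        + l' * ∑ t ∈ Finset.Ico (n - d) n, a ((t + d) % n) * b t := by
    rw [Theta, Finset.range_eq_Ico,
      ← Finset.sum_Ico_consecutive _ (Nat.zero_le (n - k)) (by omega : n - k ≤ n - d)]
  rw [hsplit, htheta, h1, h2, h3]
  ring

lemma key_lower {R : Type*} [CommRing R] (n : ℕ) (l l' : R) (a b : ℕ → R) (h : l * l' = 1)
    (i k : ℕ) (hki : k < i) (hi : i < n) :
    ∑ j ∈ Finset.range n, Af n l a i j * Af n l' b k j = l * Theta n a b (n + k - i) l' := by
  set d := n + k - i with hd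
  have hA : ∑ j ∈ Finset.Ico k i, Af n l a i j * Af n l' b k j
      = l * ∑ t ∈ Finset.Ico 0 (n - d), a ((t + d) % n) * b t := by
    rw [Finset.mul_sum, Finset.sum_Ico_eq_sum_range, Finset.sum_Ico_eq_sum_range]
    have e0 : n - d - 0 = i - k := by omega
    rw [e0]
    refine Finset.sum_congr rfl fun u hu => ?_
    simp only [Finset.mem_range] at hu
    rw [Af, Af, if_neg (by omega), if_pos (by omega), Nat.mod_eq_of_lt (by omega)]
    have e1 : n + (k + u) - i = 0 + u + d := by omega
    have e2 : k + u - k = 0 + u := by omega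
    rw [e1, e2]
    ring
  have hB : ∑ j ∈ Finset.Ico i n, Af n l a i j * Af n l' b k j
      = ∑ t ∈ Finset.Ico (n - d) (n - k), a ((t + d) % n) * b t := by
    rw [Finset.sum_Ico_eq_sum_range, Finset.sum_Ico_eq_sum_range]
    have e0 : n - k - (n - d) = n - i := by omega
    rw [e0]
    refine Finset.sum_congr rfl fun u hu => ?_
    simp only [Finset.mem_range] at hu
    rw [Af, Af, if_pos (by omega), if_pos (by omega)]
    have e1 : n - d + u + d = n + u := by omega
    rw [e1, Nat.add_mod_left, Nat.mod_eq_of_lt (by omega)]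
    have e2 : i + u - i = u := by omega
    have e3 : i + u - k = n - d + u := by omega
    rw [e2, e3]
  have hC : ∑ j ∈ Finset.Ico 0 k, Af n l a i j * Af n l' b k j
      = ∑ t ∈ Finset.Ico (n - k) n, a ((t + d) % n) * b t := by
    rw [Finset.sum_Ico_eq_sum_range, Finset.sum_Ico_eq_sum_range]
    have e0 : n - (n - k) = k := by omega
    rw [e0]
    simp only [Nat.sub_zero, Nat.zero_add]
    refine Finset.sum_congr rfl fun u hu => ?_
    simp only [Finset.mem_range] at hu
    rw [Af, Af, if_neg (by omega), if_neg (by omega)]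
    have e1 : n - k + u + d = n + (n + u - i) := by omega
    rw [e1, Nat.add_mod_left, Nat.mod_eq_of_lt (by omega)]
    have e2 : n - k + u = n + u - k := by omega
    rw [e2, mul_mul_mul_comm, h, one_mul]
  have hsplit : ∑ j ∈ Finset.range n, Af n l a i j * Af n l' b k j
      = (∑ j ∈ Finset.Ico 0 k, Af n l a i j * Af n l' b k j)
        + (∑ j ∈ Finset.Ico k i, Af n l a i j * Af n l' b k j)
        + ∑ j ∈ Finset.Ico i n, Af n l a i j * Af n l' b k j := by
    rw [Finset.range_eq_Ico, ← Finset.sum_Ico_consecutive _ (Nat.zero_le i) hi.le,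
      ← Finset.sum_Ico_consecutive _ (Nat.zero_le k) hki.le]
  have htheta : Theta n a b d l'
      = (∑ t ∈ Finset.Ico 0 (n - d), a ((t + d) % n) * b t)
        + l' * ((∑ t ∈ Finset.Ico (n - d) (n - k), a ((t + d) % n) * b t)
          + ∑ t ∈ Finset.Ico (n - k) n, a ((t + d) % n) * b t) := by
    rw [Theta, Finset.range_eq_Ico,
      ← Finset.sum_Ico_consecutive _ (by omega : n - d ≤ n - k) (by omega : n - k ≤ n)]
  rw [hsplit, htheta, hA, hB, hC]
  set X := ∑ t ∈ Finset.Ico 0 (n - d), a ((t + d) % n) * b t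
  set Y := ∑ t ∈ Finset.Ico (n - d) (n - k), a ((t + d) % n) * b t
  set Z := ∑ t ∈ Finset.Ico (n - k) n, a ((t + d) % n) * b t
  linear_combination (-(Y + Z)) * h

lemma Af_map {F : Type*} [Field F] (σ : F ≃+* F) (n : ℕ) (l : F) (a : ℕ → F) (i j : ℕ) :
    σ (Af n l a i j) = Af n (σ l) (fun m => σ (a m)) i j := by
  unfold Af; split <;> simp

lemma combo {F : Type*} [Field F] (σ : F ≃+* F) (hσ : Function.Involutive σ)
    (n : ℕ) (hn : 1 ≤ n) (a : ℕ → F) (l : F) (hl : l * σ l = 1) :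
    (∀ i k : Fin n, (1 : Matrix (Fin n) (Fin n) F) i k
        + ∑ j ∈ Finset.range n, Af n l a (i : ℕ) j * σ (Af n l a (k : ℕ) j) = 0)
      ↔ (Theta n a (fun i => σ (a i)) 0 (σ l) = -1
        ∧ ∀ j, 1 ≤ j → j ≤ n / 2 → Theta n a (fun i => σ (a i)) j (σ l) = 0) := by
  set S : ℕ → ℕ → F := fun i k => ∑ j ∈ Finset.range n, Af n l a i j * σ (Af n l a k j)
    with hSdef
  set T : ℕ → F := fun d => Theta n a (fun m => σ (a m)) d (σ l) with hTdef
  have hS : ∀ i k : ℕ, S i k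
      = ∑ j ∈ Finset.range n, Af n l a i j * Af n (σ l) (fun m => σ (a m)) k j :=
    fun i k => Finset.sum_congr rfl fun j _ => by rw [Af_map]
  have keyU : ∀ i k : ℕ, i ≤ k → k < n → S i k = T (k - i) := fun i k h1 h2 => by
    rw [hS]; exact key_upper n l (σ l) a _ hl i k h1 h2
  have keyL : ∀ i k : ℕ, k < i → i < n → S i k = l * T (n + k - i) := fun i k h1 h2 => by
    rw [hS]; exact key_lower n l (σ l) a _ hl i k h1 h2
  have herm : ∀ i k : ℕ, σ (S i k) = S k i := by
    intro i k
    rw [map_sum]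
    refine Finset.sum_congr rfl fun j _ => ?_
    rw [_root_.map_mul, hσ (Af n l a k j)]; ring
  constructor
  · intro H
    constructor
    · have h0 : (1 : Matrix (Fin n) (Fin n) F) ⟨0, hn⟩ ⟨0, hn⟩ + S 0 0 = 0 := H ⟨0, hn⟩ ⟨0, hn⟩
      rw [Matrix.one_apply_eq] at h0
      have h1 : S 0 0 = -1 := eq_neg_of_add_eq_zero_right h0
      have h2 := keyU 0 0 le_rfl hn
      rw [h2] at h1
      simpa [hTdef] using h1
    · intro j hj1 hj2
      have hjn : j < n := lt_of_le_of_lt hj2 (Nat.div_lt_self hn one_lt_two)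
      have h0 : (1 : Matrix (Fin n) (Fin n) F) ⟨0, hn⟩ ⟨j, hjn⟩ + S 0 j = 0 := H ⟨0, hn⟩ ⟨j, hjn⟩
      rw [Matrix.one_apply_ne (Fin.ne_of_val_ne (show (0:ℕ) ≠ j by omega))] at h0
      rw [zero_add] at h0
      have h2 := keyU 0 j (Nat.zero_le _) hjn
      rw [h2] at h0
      simpa [hTdef] using h0
  · rintro ⟨h0, hsm⟩
    have hT0 : T 0 = -1 := h0
    have hTs : ∀ j, 1 ≤ j → j ≤ n / 2 → T j = 0 := hsm
    have upper : ∀ i k : ℕ, i ≤ k → k < n → (if i = k then (1 : F) else 0) + S i k = 0 := by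
      intro i k hik hkn
      rcases Nat.eq_or_lt_of_le hik with rfl | hlt
      · rw [if_pos rfl, keyU i i le_rfl hkn, Nat.sub_self, hT0]; ring
      · rw [if_neg (by omega), zero_add]
        have hSik : S i k = T (k - i) := keyU i k hik hkn
        by_cases hsmall : k - i ≤ n / 2
        · rw [hSik, hTs (k - i) (by omega) hsmall]
        · have hd2 : k - i < n := by omega
          have hT : T (k - i) = σ (S (k - i) 0) := by
            rw [herm (k - i) 0, keyU 0 (k - i) (Nat.zero_le _) hd2, Nat.sub_zero]
          have hL : S (k - i) 0 = l * T (n - (k - i)) := by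
            have := keyL (k - i) 0 (by omega) hd2
            rwa [Nat.add_zero] at this
          have hz : T (n - (k - i)) = 0 := hTs _ (by omega) (by omega)
          rw [hSik, hT, hL, hz, mul_zero, map_zero]
    intro i k
    show (1 : Matrix (Fin n) (Fin n) F) i k + S (i : ℕ) (k : ℕ) = 0
    rcases le_or_gt (i : ℕ) (k : ℕ) with h | h
    · have hu := upper i k h k.isLt
      rw [Matrix.one_apply]
      simpa [Fin.ext_iff] using hu
    · have hu := upper k i h.le i.isLt
      rw [if_neg (by omega), zero_add] at hu
      have : S (i : ℕ) (k : ℕ) = σ (S (k : ℕ) (i : ℕ)) := (hσ _).symm.trans (by rw [herm])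
      rw [Matrix.one_apply_ne (Fin.ne_of_val_ne (by omega)), this, hu, map_zero, zero_add]

/-! ### The standard bilinear form and the linear-algebra reduction -/

def Bform (F : Type*) [Field F] (m : Type*) [Fintype m] : LinearMap.BilinForm F (m → F) :=
  LinearMap.mk₂ F (fun x y => ∑ c, x c * y c)
    (fun x x' y => by simp [add_mul, Finset.sum_add_distrib])
    (fun r x y => by simp [Finset.mul_sum, smul_eq_mul, mul_assoc])
    (fun x y y' => by simp [mul_add, Finset.sum_add_distrib])
    (fun r x y => by
      simp [Finset.mul_sum, smul_eq_mul]
      exact Finset.sum_congr rfl fun c _ => by ring)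

lemma Bform_apply {F : Type*} [Field F] {m : Type*} [Fintype m] (x y : m → F) :
    Bform F m x y = ∑ c, x c * y c := rfl

lemma Bform_refl {F : Type*} [Field F] (m : Type*) [Fintype m] : (Bform F m).IsRefl := by
  intro x y h
  rw [Bform_apply] at h ⊢
  rw [← h]
  exact Finset.sum_congr rfl fun c _ => mul_comm _ _

lemma Bform_nondeg {F : Type*} [Field F] (m : Type*) [Fintype m] [DecidableEq m] :
    (Bform F m).Nondegenerate := by
  refine (LinearMap.IsRefl.nondegenerate_iff_separatingLeft (B := Bform F m) (Bform_refl m)).mpr ?_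
  intro x hx
  funext c
  have := hx (Pi.single c 1)
  rw [Bform_apply] at this
  simpa [Pi.single_apply] using this

lemma la {F : Type*} [Field F] (σ : F ≃+* F) (hσ : Function.Involutive σ) (n : ℕ)
    (A : Matrix (Fin n) (Fin n) F) :
    ((Submodule.span F
        (Set.range fun i => Matrix.fromCols (1 : Matrix (Fin n) (Fin n) F) A i)
        : Submodule F (Fin n ⊕ Fin n → F)) : Set (Fin n ⊕ Fin n → F))
      = {x | ∀ y ∈ Submodule.span F
          (Set.range fun i => Matrix.fromCols (1 : Matrix (Fin n) (Fin n) F) A i),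
          ∑ c, x c * σ (y c) = 0}
    ↔ ∀ i k : Fin n, ∑ c, Matrix.fromCols (1 : Matrix (Fin n) (Fin n) F) A i c
        * σ (Matrix.fromCols (1 : Matrix (Fin n) (Fin n) F) A k c) = 0 := by
  set row : Fin n → (Fin n ⊕ Fin n → F) := fun i => Matrix.fromCols 1 A i with hrow
  set row' : Fin n → (Fin n ⊕ Fin n → F) := fun i c => σ (row i c) with hrow'
  set C := Submodule.span F (Set.range row) with hC
  set D := Submodule.span F (Set.range row') with hD
  constructor
  · intro h i k
    have hrowC : row i ∈ (C : Set (Fin n ⊕ Fin n → F)) := Submodule.subset_span ⟨i, rfl⟩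
    rw [h] at hrowC
    exact hrowC (row k) (Submodule.subset_span ⟨k, rfl⟩)
  · intro h
    have indep : ∀ (M : Fin n → (Fin n ⊕ Fin n → F)),
        (∀ i j, M i (Sum.inl j) = (1 : Matrix (Fin n) (Fin n) F) i j) →
        LinearIndependent F M := by
      intro M hM
      rw [Fintype.linearIndependent_iff]
      intro g hg i
      have := congrFun hg (Sum.inl i)
      simpa [hM, Matrix.one_apply] using this
    have hrow1 : ∀ i j, row i (Sum.inl j) = (1 : Matrix (Fin n) (Fin n) F) i j := by
      intro i j; simp [hrow, Matrix.fromCols_apply_inl]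
    have hrow'1 : ∀ i j, row' i (Sum.inl j) = (1 : Matrix (Fin n) (Fin n) F) i j := by
      intro i j
      show σ (row i (Sum.inl j)) = _
      rw [hrow1, Matrix.one_apply]
      split <;> simp
    have hCn : Module.finrank F C = n := by
      rw [hC, finrank_span_eq_card (indep row hrow1), Fintype.card_fin]
    have hDn : Module.finrank F D = n := by
      rw [hD, finrank_span_eq_card (indep row' hrow'1), Fintype.card_fin]
    have hVn : Module.finrank F (Fin n ⊕ Fin n → F) = n + n := by
      rw [Module.finrank_pi]; simp
    have sig : ∀ (r r' : Fin n → (Fin n ⊕ Fin n → F)),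
        (∀ i, (fun c => σ (r i c)) = r' i) →
        ∀ y ∈ Submodule.span F (Set.range r),
          (fun c => σ (y c)) ∈ Submodule.span F (Set.range r') := by
      intro r r' hrr y hy
      induction hy using Submodule.span_induction with
      | mem x hx =>
        obtain ⟨i, rfl⟩ := hx
        rw [hrr i]
        exact Submodule.subset_span ⟨i, rfl⟩
      | zero =>
        have : (fun c => σ ((0 : Fin n ⊕ Fin n → F) c)) = 0 := by funext c; simp
        rw [this]; exact Submodule.zero_mem _
      | add x y hx hy ihx ihy =>
        have : (fun c => σ ((x + y) c)) = (fun c => σ (x c)) + fun c => σ (y c) := by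
          funext c; simp
        rw [this]; exact Submodule.add_mem _ ihx ihy
      | smul t x hx ih =>
        have : (fun c => σ ((t • x) c)) = σ t • fun c => σ (x c) := by
          funext c; simp [smul_eq_mul]
        rw [this]; exact Submodule.smul_mem _ _ ih
    have horth : ∀ x ∈ C, ∀ z ∈ D, Bform F (Fin n ⊕ Fin n) z x = 0 := by
      intro x hx
      induction hx using Submodule.span_induction with
      | mem x hx =>
        obtain ⟨i, rfl⟩ := hx
        intro z hz
        induction hz using Submodule.span_induction with
        | mem z hz =>
          obtain ⟨k, rfl⟩ := hz
          rw [Bform_apply]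
          rw [show ∑ c, row' k c * row i c = ∑ c, row i c * σ (row k c) from
            Finset.sum_congr rfl fun c _ => mul_comm _ _]
          exact h i k
        | zero => simp
        | add z w hz hw ihz ihw => rw [map_add, LinearMap.add_apply, ihz, ihw, add_zero]
        | smul t z hz ih => rw [_root_.map_smul, LinearMap.smul_apply, ih, smul_zero]
      | zero => intro z hz; rw [map_zero]
      | add x y hx hy ihx ihy =>
        intro z hz
        rw [map_add, ihx z hz, ihy z hz, add_zero]
      | smul t x hx ih =>
        intro z hz
        rw [(Bform F (Fin n ⊕ Fin n) z).map_smul, ih z hz, smul_zero]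
    have hle : C ≤ (Bform F (Fin n ⊕ Fin n)).orthogonal D := by
      intro x hx
      rw [LinearMap.BilinForm.mem_orthogonal_iff]
      intro z hz
      exact horth x hx z hz
    have heq : C = (Bform F (Fin n ⊕ Fin n)).orthogonal D := by
      refine Submodule.eq_of_le_of_finrank_eq hle ?_
      rw [hCn, LinearMap.BilinForm.finrank_orthogonal (Bform_nondeg _), hDn, hVn]
      omega
    ext x
    simp only [SetLike.mem_coe, Set.mem_setOf_eq]
    constructor
    · intro hx y hy
      have hzy : (fun c => σ (y c)) ∈ D := sig row row' (fun i => rfl) y hy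
      rw [heq] at hx
      have h0 := (LinearMap.BilinForm.mem_orthogonal_iff.mp hx) _ hzy
      rw [Bform_apply] at h0
      rw [← h0]
      exact Finset.sum_congr rfl fun c _ => mul_comm _ _
    · intro hx
      rw [heq, LinearMap.BilinForm.mem_orthogonal_iff]
      intro z hz
      have hzy : (fun c => σ (z c)) ∈ C := by
        refine sig row' row (fun i => ?_) z hz
        funext c
        exact hσ (row i c)
      have h0 := hx _ hzy
      rw [Bform_apply]
      rw [← h0]
      refine Finset.sum_congr rfl fun c _ => ?_
      rw [hσ (z c), mul_comm]

lemma bridge {F : Type*} [Field F] (σ : F ≃+* F) (n : ℕ) (a : ℕ → F) (l : F) (i k : Fin n) :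
    (∑ c, Matrix.fromCols (1 : Matrix (Fin n) (Fin n) F) (circ n l a) i c
        * σ (Matrix.fromCols (1 : Matrix (Fin n) (Fin n) F) (circ n l a) k c))
      = (1 : Matrix (Fin n) (Fin n) F) i k
        + ∑ j ∈ Finset.range n, Af n l a (i : ℕ) j * σ (Af n l a (k : ℕ) j) := by
  rw [Fintype.sum_sum_type]
  congr 1
  · simp only [Matrix.fromCols_apply_inl]
    rw [Finset.sum_eq_single i]
    · simp [Matrix.one_apply, apply_ite σ, eq_comm]
    · intro j _ hj
      simp [Matrix.one_apply, Ne.symm hj]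
    · simp
  · simp only [Matrix.fromCols_apply_inr]
    exact Fin.sum_univ_eq_sum_range (fun j => Af n l a (i : ℕ) j * σ (Af n l a (k : ℕ) j)) n

theorem stmt6 {F : Type*} [Field F] (σ : F ≃+* F) (hσ : Function.Involutive σ)
    (n : ℕ) (hn : 1 ≤ n) (a : ℕ → F) (l : F) (hl : l * σ l = 1) :
    (Submodule.span F
        (Set.range fun i => Matrix.fromCols (1 : Matrix (Fin n) (Fin n) F) (circ n l a) i)
        : Set (Fin n ⊕ Fin n → F))
      = {x | ∀ y ∈ Submodule.span F
          (Set.range fun i => Matrix.fromCols (1 : Matrix (Fin n) (Fin n) F) (circ n l a) i),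
          ∑ c, x c * σ (y c) = 0}
    ↔ (Theta n a (fun i => σ (a i)) 0 (σ l) = -1
        ∧ ∀ j, 1 ≤ j → j ≤ n / 2 → Theta n a (fun i => σ (a i)) j (σ l) = 0) := by
  refine (la σ hσ n (circ n l a)).trans ?_
  refine Iff.trans ?_ (combo σ hσ n hn a l hl)
  exact forall₂_congr fun i k => by rw [bridge σ n a l i k]
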